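/- Let R be a commutative Noetherian ring and x_1, …, x_t a regular sequence in R whose generated ideal P = (x_1, …, x_t) is prime. Then for every m ≥ 0, the contraction along the localization map R → R_P of the ideal (P·R_P)^m equals P^m; that is, if g ∈ R has image g/1 ∈ (P·R_P)^m in the localization R_P of R at P, then g ∈ P^m. -/

import Mathlib

open MvPolynomial

section QuasiReg

variable {R : Type*} [CommRing R] {N : ℕ}

/-- The ideal generated by the first `n` of the `x i`. -/
def pid (x : Fin N → R) (n : ℕ) : Ideal R := Ideal.span (x '' {i | (i : ℕ) < n})

/-- A polynomial only uses variables with index `< n`. -/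
def SuppLT (n : ℕ) (F : MvPolynomial (Fin N) R) : Prop :=
  ∀ α : Fin N →₀ ℕ, MvPolynomial.coeff α F ≠ 0 → ∀ i, α i ≠ 0 → (i : ℕ) < n

lemma pid_mono (x : Fin N → R) {n n' : ℕ} (h : n ≤ n') : pid x n ≤ pid x n' :=
  Ideal.span_mono (Set.image_mono fun _ hi => lt_of_lt_of_le hi h)

lemma pow_le_pow_ideal {I J : Ideal R} (h : I ≤ J) (k : ℕ) : I ^ k ≤ J ^ k := by
  induction k with
  | zero => simp
  | succ k ih => rw [pow_succ, pow_succ]; exact Ideal.mul_mono ih h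

lemma isHomog_iff {F : MvPolynomial (Fin N) R} {k : ℕ} :
    F.IsHomogeneous k ↔ ∀ d : Fin N →₀ ℕ, coeff d F ≠ 0 → d.degree = k := by
  constructor
  · intro h d hd
    rw [Finsupp.degree_eq_weight_one]
    exact h hd
  · intro h d hd
    have := h d hd
    rw [Finsupp.degree_eq_weight_one] at this
    exact this

lemma degree_add' (a b : Fin N →₀ ℕ) : (a + b).degree = a.degree + b.degree := by
  simp [Finsupp.degree_eq_weight_one]

lemma degree_single_one (i : Fin N) : (Finsupp.single i 1 : Fin N →₀ ℕ).degree = 1 := by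
  exact Finsupp.degree_single i 1

namespace SuppLT

variable {n : ℕ} {F G : MvPolynomial (Fin N) R}

lemma add (hF : SuppLT n F) (hG : SuppLT n G) : SuppLT n (F + G) := by
  intro α hα i hi
  rw [coeff_add] at hα
  by_cases h1 : coeff α F ≠ 0
  · exact hF α h1 i hi
  · push_neg at h1
    rw [h1, zero_add] at hα
    exact hG α hα i hi

lemma sub (hF : SuppLT n F) (hG : SuppLT n G) : SuppLT n (F - G) := by
  intro α hα i hi
  rw [coeff_sub] at hα
  by_cases h1 : coeff α F ≠ 0
  · exact hF α h1 i hi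
  · push_neg at h1
    rw [h1, zero_sub, neg_ne_zero] at hα
    exact hG α hα i hi

lemma C_mul (r : R) (hF : SuppLT n F) : SuppLT n (C r * F) := by
  intro α hα i hi
  rw [coeff_C_mul] at hα
  exact hF α (right_ne_zero_of_mul hα) i hi

lemma mul (hF : SuppLT n F) (hG : SuppLT n G) : SuppLT n (F * G) := by
  classical
  intro α hα i hi
  have hmem : α ∈ (F * G).support := mem_support_iff.mpr hα
  have := MvPolynomial.support_mul F G hmem
  rw [Finset.mem_add] at this
  obtain ⟨β, hβ, γ, hγ, hsum⟩ := this
  have : β i + γ i ≠ 0 := by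
    rw [← Finsupp.add_apply, hsum]; exact hi
  rcases Nat.eq_zero_or_pos (β i) with h | h
  · exact hG γ (mem_support_iff.mp hγ) i (by omega)
  · exact hF β (mem_support_iff.mp hβ) i (by omega)

lemma zero : SuppLT n (0 : MvPolynomial (Fin N) R) := by
  intro α hα
  simp at hα

lemma C (r : R) : SuppLT n (MvPolynomial.C r : MvPolynomial (Fin N) R) := by
  intro α hα i hi
  classical
  rw [coeff_C] at hα
  split at hα
  · subst ‹0 = α›; simp at hi
  · exact absurd rfl hα

lemma X {i : Fin N} (h : (i : ℕ) < n) : SuppLT n (MvPolynomial.X i : MvPolynomial (Fin N) R) := by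
  classical
  intro α hα j hj
  rw [coeff_X'] at hα
  split at hα
  · subst ‹Finsupp.single i 1 = α›
    rw [Finsupp.single_apply] at hj
    split at hj
    · subst ‹i = j›; exact h
    · exact absurd rfl hj
  · exact absurd rfl hα

end SuppLT

lemma prod_pow_mem (I : Ideal R) (y : Fin N → R) (d : Fin N →₀ ℕ) (s : Finset (Fin N))
    (h : ∀ i ∈ s, y i ∈ I) : (∏ i ∈ s, y i ^ d i) ∈ I ^ (∑ i ∈ s, d i) := by
  classical
  induction s using Finset.induction with
  | empty => simp [Ideal.one_eq_top]
  | insert a s hni ih =>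
    rw [Finset.prod_insert hni, Finset.sum_insert hni, pow_add]
    exact Ideal.mul_mem_mul (Ideal.pow_mem_pow (h a (Finset.mem_insert_self a s)) _)
      (ih fun i hi => h i (Finset.mem_insert_of_mem hi))

lemma eval_mem_of (x : Fin N → R) (J : Ideal R) {n k : ℕ} {F : MvPolynomial (Fin N) R}
    (hF : F.IsHomogeneous k) (hs : SuppLT n F) (hc : ∀ α, coeff α F ∈ J) :
    eval x F ∈ J * (pid x n) ^ k := by
  rw [eval_eq]
  refine Ideal.sum_mem _ fun d hd => ?_
  have hdeg : (∑ i ∈ d.support, d i) = k := isHomog_iff.mp hF d (mem_support_iff.mp hd)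
  rw [← hdeg]
  exact Ideal.mul_mem_mul (hc d)
    (prod_pow_mem _ _ _ _ fun i hi =>
      Ideal.subset_span ⟨i, hs d (mem_support_iff.mp hd) i (Finsupp.mem_support_iff.mp hi), rfl⟩)

lemma exists_repr (x : Fin N → R) (n : ℕ) (k : ℕ) :
    ∀ g : R, g ∈ (pid x n) ^ k →
      ∃ F : MvPolynomial (Fin N) R, F.IsHomogeneous k ∧ SuppLT n F ∧ eval x F = g := by
  induction k with
  | zero =>
    intro g _
    exact ⟨C g, isHomogeneous_C _ _, SuppLT.C g, eval_C _⟩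
  | succ k ih =>
    intro g hg
    rw [pow_succ] at hg
    refine Submodule.mul_induction_on hg ?_ ?_
    · intro p hp q hq
      obtain ⟨Fp, hp1, hp2, hp3⟩ := ih p hp
      have hq' : ∃ Fq : MvPolynomial (Fin N) R,
          Fq.IsHomogeneous 1 ∧ SuppLT n Fq ∧ eval x Fq = q := by
        refine Submodule.span_induction ?_ ?_ ?_ ?_ hq
        · rintro _ ⟨i, hi, rfl⟩
          exact ⟨X i, isHomogeneous_X _ _, SuppLT.X hi, eval_X _⟩
        · exact ⟨0, isHomogeneous_zero _ _ _, SuppLT.zero, map_zero _⟩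
        · rintro a b _ _ ⟨Fa, h1, h2, h3⟩ ⟨Fb, g1, g2, g3⟩
          exact ⟨Fa + Fb, h1.add g1, h2.add g2, by simp [h3, g3]⟩
        · rintro r a _ ⟨Fa, h1, h2, h3⟩
          exact ⟨C r * Fa, by simpa using (isHomogeneous_C _ r).mul h1, h2.C_mul r,
            by simp [h3, smul_eq_mul]⟩
      obtain ⟨Fq, hq1, hq2, hq3⟩ := hq'
      exact ⟨Fp * Fq, hp1.mul hq1, hp2.mul hq2, by simp [hp3, hq3]⟩
    · rintro a b ⟨Fa, h1, h2, h3⟩ ⟨Fb, g1, g2, g3⟩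
      exact ⟨Fa + Fb, h1.add g1, h2.add g2, by simp [h3, g3]⟩

lemma sup_pow_le (I Z : Ideal R) : ∀ m : ℕ, (I ⊔ Z) ^ (m + 1) ≤ I ^ (m + 1) ⊔ Z * (I ⊔ Z) ^ m := by
  intro m
  induction m with
  | zero => simp [Ideal.mul_top]
  | succ m ih =>
    calc (I ⊔ Z) ^ (m + 2) = (I ⊔ Z) ^ (m + 1) * (I ⊔ Z) := by rw [pow_succ]
    _ ≤ (I ^ (m + 1) ⊔ Z * (I ⊔ Z) ^ m) * (I ⊔ Z) := Ideal.mul_mono ih le_rfl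
    _ = I ^ (m + 1) * I ⊔ I ^ (m + 1) * Z ⊔ Z * (I ⊔ Z) ^ m * (I ⊔ Z) := by
        rw [Ideal.sup_mul, Ideal.mul_sup]
    _ ≤ I ^ (m + 2) ⊔ Z * (I ⊔ Z) ^ (m + 1) := by
        apply sup_le (sup_le ?_ ?_) ?_
        · rw [← pow_succ]
          exact le_sup_left
        · rw [mul_comm]
          exact le_sup_of_le_right (Ideal.mul_mono le_rfl
            (pow_le_pow_ideal le_sup_left (m + 1)))
        · rw [mul_assoc, ← pow_succ]
          exact le_sup_right

lemma pid_succ_eq (x : Fin N → R) {n : ℕ} (h : n < N) :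
    pid x (n + 1) = pid x n ⊔ Ideal.span {x ⟨n, h⟩} := by
  have hset : {i : Fin N | (i : ℕ) < n + 1} = {i : Fin N | (i : ℕ) < n} ∪ {⟨n, h⟩} := by
    ext i
    constructor
    · intro hi
      rcases Nat.lt_succ_iff_lt_or_eq.mp hi with h' | h'
      · exact Or.inl h'
      · exact Or.inr (Fin.ext h')
    · rintro (h' | rfl)
      · exact Nat.lt_succ_of_lt h'
      · exact Nat.lt_succ_self n
  unfold pid
  rw [hset, Set.image_union, Set.image_singleton, Ideal.span_union]

lemma mem_decomp (x : Fin N → R) {n : ℕ} (h : n < N) {m : ℕ} {g : R}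
    (hg : g ∈ pid x (n + 1) ^ (m + 1)) :
    ∃ u ∈ pid x n ^ (m + 1), ∃ v ∈ pid x (n + 1) ^ m, g = u + x ⟨n, h⟩ * v := by
  have hle := sup_pow_le (pid x n) (Ideal.span {x ⟨n, h⟩}) m
  rw [← pid_succ_eq x h] at hle
  have := hle hg
  rw [Submodule.mem_sup] at this
  obtain ⟨u, hu, w, hw, hsum⟩ := this
  rw [Ideal.mem_span_singleton_mul] at hw
  obtain ⟨v, hv, hzv⟩ := hw
  exact ⟨u, hu, v, hv, by rw [← hsum, hzv]⟩

lemma eq_C_of_coeff_eq_zero {F : MvPolynomial (Fin N) R}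
    (h : ∀ d : Fin N →₀ ℕ, d ≠ 0 → coeff d F = 0) : F = C (coeff 0 F) := by
  classical
  apply MvPolynomial.ext
  intro d
  rw [coeff_C]
  by_cases hd : d = 0
  · subst hd; simp
  · rw [if_neg (fun hh => hd hh.symm)]
    exact h d hd

lemma homog_zero_eq_C {F : MvPolynomial (Fin N) R} (hF : F.IsHomogeneous 0) :
    F = C (coeff 0 F) := by
  apply eq_C_of_coeff_eq_zero
  intro d hd
  exact hF.coeff_eq_zero (fun h => hd (Finsupp.degree_eq_zero_iff d |>.mp h))

theorem quasiReg (x : Fin N → R)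
    (hreg : ∀ (i : Fin N) (f : R), x i * f ∈ pid x (i : ℕ) → f ∈ pid x (i : ℕ)) :
    ∀ n, n ≤ N → ∀ (m : ℕ) (F : MvPolynomial (Fin N) R), F.IsHomogeneous m → SuppLT n F →
      eval x F ∈ pid x n ^ (m + 1) → ∀ α, coeff α F ∈ pid x n := by
  intro n
  induction n with
  | zero =>
    intro _ m F hF hsupp hev α
    have hbot : pid x 0 = ⊥ := by
      have : {i : Fin N | (i : ℕ) < 0} = ∅ := by ext i; simp
      simp [pid, this]
    have hall : ∀ d : Fin N →₀ ℕ, d ≠ 0 → coeff d F = 0 := by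
      intro d hd
      by_contra hco
      obtain ⟨i, hi⟩ := Finsupp.ne_iff.mp hd
      simp only [Finsupp.coe_zero, Pi.zero_apply] at hi
      exact absurd (hsupp d hco i hi) (Nat.not_lt_zero _)
    have hFC := eq_C_of_coeff_eq_zero hall
    rw [hFC, eval_C, hbot] at hev
    have h0 : coeff 0 F = 0 := by
      have : (⊥ : Ideal R) ^ (m + 1) = ⊥ := by
        rw [← Ideal.zero_eq_bot, zero_pow (Nat.succ_ne_zero m)]
      rw [this] at hev
      simpa using hev
    rw [hFC, h0, map_zero]
    simp
  | succ n ihn =>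
    intro hn1
    have hnN : n < N := Nat.lt_of_lt_of_le (Nat.lt_succ_self n) hn1
    have ihn' := ihn (le_trans (Nat.le_succ n) hn1)
    set z : R := x ⟨n, hnN⟩ with hz
    have hregz : ∀ f : R, z * f ∈ pid x n → f ∈ pid x n := fun f hf => hreg ⟨n, hnN⟩ f hf
    -- colon lemma
    have CL : ∀ (k : ℕ) (w : R), z * w ∈ pid x n ^ k → w ∈ pid x n ^ k := by
      intro k w hzw
      suffices h : ∀ j, j ≤ k → w ∈ pid x n ^ j from h k le_rfl
      intro j
      induction j with
      | zero => intro _; rw [pow_zero, Ideal.one_eq_top]; exact Submodule.mem_top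
      | succ j ihj =>
        intro hjk
        have hwj := ihj (le_trans (Nat.le_succ j) hjk)
        obtain ⟨W, h1, h2, h3⟩ := exists_repr x n j w hwj
        have hevzW : eval x (C z * W) ∈ pid x n ^ (j + 1) := by
          have : eval x (C z * W) = z * w := by simp [h3]
          rw [this]
          exact Ideal.pow_le_pow_right hjk hzw
        have hco := ihn' j (C z * W) (by simpa using (isHomogeneous_C _ z).mul h1)
          (h2.C_mul z) hevzW
        have hWc : ∀ α, coeff α W ∈ pid x n := by
          intro α
          have := hco α
          rw [coeff_C_mul] at this
          exact hregz _ this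
        have := eval_mem_of x (pid x n) h1 h2 hWc
        rw [h3] at this
        rwa [pow_succ, mul_comm]
    -- inner induction on the degree
    intro m
    induction m with
    | zero =>
      intro F hF hsupp hev α
      have hFC := homog_zero_eq_C hF
      rw [hFC, eval_C, pow_one] at hev
      rw [hFC]
      classical
      rw [coeff_C]
      split
      · exact hev
      · exact zero_mem _
    | succ j ihm =>
      intro F hF hsupp hev
      classical
      set i0 : Fin N := ⟨n, hnN⟩ with hi0
      set s : Fin N →₀ ℕ := Finsupp.single i0 1 with hs
      set H := F.divMonomial s with hH
      set G := F.modMonomial s with hG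
      have hdm : X i0 * H + G = F := by
        have := MvPolynomial.divMonomial_add_modMonomial F s
        rw [show (monomial s (1 : R)) = X i0 from rfl] at this
        exact this
      have hcoH : ∀ d, coeff d H = coeff (s + d) F := fun d =>
        MvPolynomial.coeff_divMonomial s F d
      have hHhom : H.IsHomogeneous j := by
        rw [isHomog_iff]
        intro d hd
        rw [hcoH] at hd
        have := isHomog_iff.mp hF _ hd
        rw [degree_add', degree_single_one] at this
        omega
      have hGcases : ∀ d, coeff d G = 0 ∨ (coeff d G = coeff d F ∧ d i0 = 0) := by
        intro d
        by_cases hle : s ≤ d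
        · exact Or.inl (MvPolynomial.coeff_modMonomial_of_le F hle)
        · refine Or.inr ⟨MvPolynomial.coeff_modMonomial_of_not_le F hle, ?_⟩
          rw [hs, Finsupp.single_le_iff] at hle
          omega
      have hGhom : G.IsHomogeneous (j + 1) := by
        rw [isHomog_iff]
        intro d hd
        rcases hGcases d with h | ⟨h, _⟩
        · exact absurd h hd
        · rw [h] at hd
          exact isHomog_iff.mp hF d hd
      have hGsupp : SuppLT n G := by
        intro d hd i hi
        rcases hGcases d with h | ⟨h, h0⟩
        · exact absurd h hd
        · rw [h] at hd
          have hlt := hsupp d hd i hi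
          have : (i : ℕ) ≠ n := by
            intro hh
            have : i = i0 := Fin.ext hh
            rw [this, h0] at hi
            exact hi rfl
          omega
      have hHsupp : SuppLT (n + 1) H := by
        intro d hd i hi
        rw [hcoH] at hd
        refine hsupp (s + d) hd i ?_
        rw [Finsupp.add_apply]
        omega
      have hzmem : z ∈ pid x (n + 1) :=
        Ideal.subset_span ⟨i0, Nat.lt_succ_self n, rfl⟩
      have hev' : eval x F = z * eval x H + eval x G := by
        rw [← hdm]
        simp [hz]
      -- decompose eval x F
      obtain ⟨u, hu, v, hv, hdecF⟩ := mem_decomp x hnN hev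
      have hGn : eval x G ∈ pid x n ^ (j + 1) := by
        have := eval_mem_of x ⊤ hGhom hGsupp (fun α => trivial)
        rwa [Ideal.top_mul] at this
      have hB : z * (eval x H - v) = u - eval x G := by
        have e : z * eval x H + eval x G = u + z * v := hev'.symm.trans hdecF
        linear_combination e
      have hHv : eval x H ∈ pid x (n + 1) ^ (j + 1) := by
        have h1 : eval x H - v ∈ pid x n ^ (j + 1) := by
          apply CL
          rw [hB]
          exact sub_mem (Ideal.pow_le_pow_right (Nat.le_succ _) hu) hGn
        have h2 : eval x H - v ∈ pid x (n + 1) ^ (j + 1) :=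
          pow_le_pow_ideal (pid_mono x (Nat.le_succ n)) _ h1
        have := add_mem h2 hv
        simpa using this
      have hHcoeff : ∀ α, coeff α H ∈ pid x (n + 1) := ihm H hHhom hHsupp hHv
      -- handle G
      have hGev2 : eval x G ∈ pid x (n + 1) ^ (j + 2) := by
        have hzH : z * eval x H ∈ pid x (n + 1) ^ (j + 2) := by
          have := Ideal.mul_mem_mul hzmem hHv
          rwa [← pow_succ'] at this
        have : eval x G = eval x F - z * eval x H := by rw [hev']; ring
        rw [this]
        exact sub_mem hev hzH
      obtain ⟨u', hu', v', hv', hdecG⟩ := mem_decomp x hnN hGev2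
      have hv'n : v' ∈ pid x n ^ (j + 1) := by
        apply CL
        have : z * v' = eval x G - u' := by linear_combination -hdecG
        rw [this]
        exact sub_mem hGn (Ideal.pow_le_pow_right (Nat.le_succ _) hu')
      obtain ⟨V, hV1, hV2, hV3⟩ := exists_repr x n (j + 1) v' hv'n
      set D := G - C z * V with hD
      have hD1 : D.IsHomogeneous (j + 1) :=
        hGhom.sub (by simpa using (isHomogeneous_C _ z).mul hV1)
      have hD2 : SuppLT n D := hGsupp.sub (hV2.C_mul z)
      have hDev : eval x D ∈ pid x n ^ (j + 2) := by
        have : eval x D = u' := by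
          simp only [hD, map_sub, map_mul, eval_C, hV3]
          linear_combination hdecG
        rw [this]
        exact hu'
      have hDcoeff := ihn' (j + 1) D hD1 hD2 hDev
      have hGcoeff : ∀ α, coeff α G ∈ pid x (n + 1) := by
        intro α
        have hsplit : coeff α G = coeff α D + z * coeff α V := by
          simp only [hD, coeff_sub, coeff_C_mul]
          ring
        rw [hsplit]
        exact add_mem (pid_mono x (Nat.le_succ n) (hDcoeff α))
          (Ideal.mul_mem_right _ _ hzmem)
      intro α
      have hXH : coeff α (X i0 * H) ∈ pid x (n + 1) := by
        rw [MvPolynomial.coeff_X_mul']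
        split
        · exact hHcoeff _
        · exact zero_mem _
      have : coeff α F = coeff α (X i0 * H) + coeff α G := by
        rw [← hdm, coeff_add]
      rw [this]
      exact add_mem hXH (hGcoeff α)

end QuasiReg

/-- A list `xs = [x₁, …, xₙ]` of elements of a commutative ring `R` is a regular sequence if
each `xᵢ` is a nonzerodivisor modulo the ideal generated by its predecessors, and the ideal
`(x₁, …, xₙ)` is proper. -/
def IsRegularSeq {R : Type*} [CommRing R] (xs : List R) : Prop :=
  (∀ (i : Fin xs.length) (f : R),
      xs.get i * f ∈ Ideal.span {a | a ∈ xs.take (i : ℕ)} →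
        f ∈ Ideal.span {a | a ∈ xs.take (i : ℕ)}) ∧
    Ideal.span {a | a ∈ xs} ≠ ⊤

/-- Let `R` be Noetherian and `x₁, …, x_t` a regular sequence whose generated
ideal `P` is prime. Then for every `m`, the contraction along `R → R_P` of `(P·R_P) ^ m`
equals `P ^ m`. -/
theorem comap_localization_prime_pow_eq
    {R : Type*} [CommRing R] [IsNoetherianRing R] (xs : List R)
    (hreg : IsRegularSeq xs)
    (P : Ideal R) (hP : P = Ideal.span {a | a ∈ xs}) [hprime : P.IsPrime]
    (m : ℕ) :
    Ideal.comap (algebraMap R (Localization.AtPrime P))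
        ((P.map (algebraMap R (Localization.AtPrime P))) ^ m) = P ^ m := by
  classical
  set n := xs.length with hn
  set x : Fin n → R := xs.get with hx
  have htake : ∀ k : ℕ, k ≤ n → {a | a ∈ xs.take k} = x '' {i : Fin n | (i : ℕ) < k} := by
    intro k hk
    ext a
    simp only [Set.mem_setOf_eq, Set.mem_image]
    constructor
    · intro ha
      rw [List.mem_iff_getElem] at ha
      obtain ⟨i, hi, hval⟩ := ha
      rw [List.length_take] at hi
      have hi' : i < n := lt_of_lt_of_le (lt_of_lt_of_le hi (min_le_left _ _)) hk
      refine ⟨⟨i, hi'⟩, lt_of_lt_of_le hi (min_le_left _ _), ?_⟩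
      rw [← hval]
      simp [hx, List.getElem_take]
    · rintro ⟨i, hik, rfl⟩
      rw [List.mem_iff_getElem]
      refine ⟨(i : ℕ), ?_, ?_⟩
      · rw [List.length_take]; exact lt_min hik i.isLt
      · simp [hx, List.getElem_take]
  have hPspan : P = pid x n := by
    rw [hP]
    unfold pid
    congr 1
    ext a
    simp only [Set.mem_setOf_eq, Set.mem_image]
    constructor
    · intro ha
      rw [List.mem_iff_get] at ha
      obtain ⟨i, hi⟩ := ha
      exact ⟨i, i.isLt, hi⟩
    · rintro ⟨i, _, rfl⟩
      exact List.get_mem xs i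
  have hreg' : ∀ (i : Fin n) (f : R), x i * f ∈ pid x (i : ℕ) → f ∈ pid x (i : ℕ) := by
    intro i f h
    have hspan : Ideal.span {a | a ∈ xs.take (i : ℕ)} = pid x (i : ℕ) := by
      unfold pid
      rw [htake (i : ℕ) (le_of_lt i.isLt)]
    rw [← hspan] at h ⊢
    exact hreg.1 i f h
  -- the saturation property
  have hsat : ∀ g s : R, s ∉ P → s * g ∈ P ^ m → g ∈ P ^ m := by
    intro g s hs hsg
    suffices h : ∀ k, k ≤ m → g ∈ P ^ k from h m le_rfl
    intro k
    induction k with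
    | zero => intro _; rw [pow_zero, Ideal.one_eq_top]; exact Submodule.mem_top
    | succ k ihk =>
      intro hkm
      have hk : g ∈ pid x n ^ k := by
        rw [← hPspan]
        exact ihk (le_trans (Nat.le_succ k) hkm)
      obtain ⟨F, h1, h2, h3⟩ := exists_repr x n k g hk
      have hev : eval x (C s * F) ∈ pid x n ^ (k + 1) := by
        have he : eval x (C s * F) = s * g := by simp [h3]
        rw [he, ← hPspan]
        exact Ideal.pow_le_pow_right hkm hsg
      have hco := quasiReg x hreg' n le_rfl k (C s * F)
        (by simpa using (isHomogeneous_C _ s).mul h1) (h2.C_mul s) hev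
      have hcF : ∀ α, MvPolynomial.coeff α F ∈ pid x n := by
        intro α
        have := hco α
        rw [MvPolynomial.coeff_C_mul] at this
        rw [← hPspan] at this
        rcases hprime.mem_or_mem this with h | h
        · exact absurd h hs
        · rw [hPspan] at h; exact h
      have := eval_mem_of x (pid x n) h1 h2 hcF
      rw [h3] at this
      rw [hPspan, pow_succ, mul_comm]
      exact this
  apply le_antisymm
  · intro g hg
    rw [Ideal.mem_comap, ← Ideal.map_pow] at hg
    obtain ⟨⟨a, sx⟩, he⟩ := (IsLocalization.mem_map_algebraMap_iff P.primeCompl _).mp hg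
    rw [← map_mul] at he
    obtain ⟨c, hc⟩ := (IsLocalization.eq_iff_exists P.primeCompl _).mp he
    have hmem : ((c : R) * (sx : R)) * g ∈ P ^ m := by
      have : ((c : R) * (sx : R)) * g = (c : R) * (g * (sx : R)) := by ring
      rw [this, hc]
      exact Ideal.mul_mem_left _ _ a.2
    have hnotin : (c : R) * (sx : R) ∉ P := P.primeCompl.mul_mem c.2 sx.2
    exact hsat g _ hnotin hmem
  · rw [← Ideal.map_pow]
    exact Ideal.le_comap_map
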